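/- The Petersen graph is not 3-edge-colorable: there is no assignment of colors {1,2,3} to its 15 edges such that edges sharing a vertex receive distinct colors. -/
import Mathlib


/-- The Petersen graph on `Fin 10`: vertices `0–4` form the outer 5-cycle,
vertices `5–9` the inner pentagram (`5+i` adjacent to `5+((i+2) mod 5)`),
and `i` is adjacent to `i+5` for `i < 5`. -/
def Petersen : SimpleGraph (Fin 10) :=
  SimpleGraph.fromRel (fun u v =>
    (u.val < 5 ∧ v.val < 5 ∧ (u.val + 1) % 5 = v.val) ∨
    (5 ≤ u.val ∧ 5 ≤ v.val ∧ (u.val - 5 + 2) % 5 + 5 = v.val) ∨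
    (u.val < 5 ∧ v.val = u.val + 5))

lemma padj (u v : Fin 10)
    (huv : decide ((u ≠ v) ∧
      (((u.val < 5 ∧ v.val < 5 ∧ (u.val + 1) % 5 = v.val) ∨
        (5 ≤ u.val ∧ 5 ≤ v.val ∧ (u.val - 5 + 2) % 5 + 5 = v.val) ∨
        (u.val < 5 ∧ v.val = u.val + 5)) ∨
       ((v.val < 5 ∧ u.val < 5 ∧ (v.val + 1) % 5 = u.val) ∨
        (5 ≤ v.val ∧ 5 ≤ u.val ∧ (v.val - 5 + 2) % 5 + 5 = u.val) ∨
        (v.val < 5 ∧ u.val = v.val + 5))) ) = true) : Petersen.Adj u v := by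
  rw [Petersen, SimpleGraph.fromRel_adj]
  exact of_decide_eq_true huv

set_option maxHeartbeats 2000000 in
/-- The Petersen graph is not 3-edge-colorable: there is no symmetric assignment
of colors `{1,2,3}` to its edges such that edges sharing a vertex receive
distinct colors. -/
theorem stmt15 :
    ¬ ∃ c : Fin 10 → Fin 10 → Fin 3,
      (∀ u v, c u v = c v u) ∧
      ∀ u v w, Petersen.Adj u v → Petersen.Adj u w → v ≠ w → c u v ≠ c u w := by
  rintro ⟨c, hsym, h⟩
  have lt_0_1 : (c 0 1).val < 3 := (c 0 1).isLt
  have lt_0_4 : (c 0 4).val < 3 := (c 0 4).isLt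
  have lt_0_5 : (c 0 5).val < 3 := (c 0 5).isLt
  have lt_1_2 : (c 1 2).val < 3 := (c 1 2).isLt
  have lt_1_6 : (c 1 6).val < 3 := (c 1 6).isLt
  have lt_2_3 : (c 2 3).val < 3 := (c 2 3).isLt
  have lt_2_7 : (c 2 7).val < 3 := (c 2 7).isLt
  have lt_3_4 : (c 3 4).val < 3 := (c 3 4).isLt
  have lt_3_8 : (c 3 8).val < 3 := (c 3 8).isLt
  have lt_4_9 : (c 4 9).val < 3 := (c 4 9).isLt
  have lt_5_7 : (c 5 7).val < 3 := (c 5 7).isLt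
  have lt_5_8 : (c 5 8).val < 3 := (c 5 8).isLt
  have lt_6_8 : (c 6 8).val < 3 := (c 6 8).isLt
  have lt_6_9 : (c 6 9).val < 3 := (c 6 9).isLt
  have lt_7_9 : (c 7 9).val < 3 := (c 7 9).isLt
  have d_0_1_4 : (c 0 1).val ≠ (c 0 4).val := by
    have e1 := congrArg Fin.val (hsym 0 1)
    have e2 := congrArg Fin.val (hsym 0 4)
    have := Fin.val_ne_of_ne (h 0 1 4 (padj 0 1 (by decide)) (padj 0 4 (by decide)) (by decide))
    omega
  have d_0_1_5 : (c 0 1).val ≠ (c 0 5).val := by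
    have e1 := congrArg Fin.val (hsym 0 1)
    have e2 := congrArg Fin.val (hsym 0 5)
    have := Fin.val_ne_of_ne (h 0 1 5 (padj 0 1 (by decide)) (padj 0 5 (by decide)) (by decide))
    omega
  have d_0_4_5 : (c 0 4).val ≠ (c 0 5).val := by
    have e1 := congrArg Fin.val (hsym 0 4)
    have e2 := congrArg Fin.val (hsym 0 5)
    have := Fin.val_ne_of_ne (h 0 4 5 (padj 0 4 (by decide)) (padj 0 5 (by decide)) (by decide))
    omega
  have d_1_0_2 : (c 0 1).val ≠ (c 1 2).val := by
    have e1 := congrArg Fin.val (hsym 1 0)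
    have e2 := congrArg Fin.val (hsym 1 2)
    have := Fin.val_ne_of_ne (h 1 0 2 (padj 1 0 (by decide)) (padj 1 2 (by decide)) (by decide))
    omega
  have d_1_0_6 : (c 0 1).val ≠ (c 1 6).val := by
    have e1 := congrArg Fin.val (hsym 1 0)
    have e2 := congrArg Fin.val (hsym 1 6)
    have := Fin.val_ne_of_ne (h 1 0 6 (padj 1 0 (by decide)) (padj 1 6 (by decide)) (by decide))
    omega
  have d_1_2_6 : (c 1 2).val ≠ (c 1 6).val := by
    have e1 := congrArg Fin.val (hsym 1 2)
    have e2 := congrArg Fin.val (hsym 1 6)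
    have := Fin.val_ne_of_ne (h 1 2 6 (padj 1 2 (by decide)) (padj 1 6 (by decide)) (by decide))
    omega
  have d_2_1_3 : (c 1 2).val ≠ (c 2 3).val := by
    have e1 := congrArg Fin.val (hsym 2 1)
    have e2 := congrArg Fin.val (hsym 2 3)
    have := Fin.val_ne_of_ne (h 2 1 3 (padj 2 1 (by decide)) (padj 2 3 (by decide)) (by decide))
    omega
  have d_2_1_7 : (c 1 2).val ≠ (c 2 7).val := by
    have e1 := congrArg Fin.val (hsym 2 1)
    have e2 := congrArg Fin.val (hsym 2 7)
    have := Fin.val_ne_of_ne (h 2 1 7 (padj 2 1 (by decide)) (padj 2 7 (by decide)) (by decide))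
    omega
  have d_2_3_7 : (c 2 3).val ≠ (c 2 7).val := by
    have e1 := congrArg Fin.val (hsym 2 3)
    have e2 := congrArg Fin.val (hsym 2 7)
    have := Fin.val_ne_of_ne (h 2 3 7 (padj 2 3 (by decide)) (padj 2 7 (by decide)) (by decide))
    omega
  have d_3_2_4 : (c 2 3).val ≠ (c 3 4).val := by
    have e1 := congrArg Fin.val (hsym 3 2)
    have e2 := congrArg Fin.val (hsym 3 4)
    have := Fin.val_ne_of_ne (h 3 2 4 (padj 3 2 (by decide)) (padj 3 4 (by decide)) (by decide))
    omega
  have d_3_2_8 : (c 2 3).val ≠ (c 3 8).val := by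
    have e1 := congrArg Fin.val (hsym 3 2)
    have e2 := congrArg Fin.val (hsym 3 8)
    have := Fin.val_ne_of_ne (h 3 2 8 (padj 3 2 (by decide)) (padj 3 8 (by decide)) (by decide))
    omega
  have d_3_4_8 : (c 3 4).val ≠ (c 3 8).val := by
    have e1 := congrArg Fin.val (hsym 3 4)
    have e2 := congrArg Fin.val (hsym 3 8)
    have := Fin.val_ne_of_ne (h 3 4 8 (padj 3 4 (by decide)) (padj 3 8 (by decide)) (by decide))
    omega
  have d_4_3_0 : (c 3 4).val ≠ (c 0 4).val := by
    have e1 := congrArg Fin.val (hsym 4 3)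
    have e2 := congrArg Fin.val (hsym 4 0)
    have := Fin.val_ne_of_ne (h 4 3 0 (padj 4 3 (by decide)) (padj 4 0 (by decide)) (by decide))
    omega
  have d_4_3_9 : (c 3 4).val ≠ (c 4 9).val := by
    have e1 := congrArg Fin.val (hsym 4 3)
    have e2 := congrArg Fin.val (hsym 4 9)
    have := Fin.val_ne_of_ne (h 4 3 9 (padj 4 3 (by decide)) (padj 4 9 (by decide)) (by decide))
    omega
  have d_4_0_9 : (c 0 4).val ≠ (c 4 9).val := by
    have e1 := congrArg Fin.val (hsym 4 0)
    have e2 := congrArg Fin.val (hsym 4 9)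
    have := Fin.val_ne_of_ne (h 4 0 9 (padj 4 0 (by decide)) (padj 4 9 (by decide)) (by decide))
    omega
  have d_5_0_7 : (c 0 5).val ≠ (c 5 7).val := by
    have e1 := congrArg Fin.val (hsym 5 0)
    have e2 := congrArg Fin.val (hsym 5 7)
    have := Fin.val_ne_of_ne (h 5 0 7 (padj 5 0 (by decide)) (padj 5 7 (by decide)) (by decide))
    omega
  have d_5_0_8 : (c 0 5).val ≠ (c 5 8).val := by
    have e1 := congrArg Fin.val (hsym 5 0)
    have e2 := congrArg Fin.val (hsym 5 8)
    have := Fin.val_ne_of_ne (h 5 0 8 (padj 5 0 (by decide)) (padj 5 8 (by decide)) (by decide))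
    omega
  have d_5_7_8 : (c 5 7).val ≠ (c 5 8).val := by
    have e1 := congrArg Fin.val (hsym 5 7)
    have e2 := congrArg Fin.val (hsym 5 8)
    have := Fin.val_ne_of_ne (h 5 7 8 (padj 5 7 (by decide)) (padj 5 8 (by decide)) (by decide))
    omega
  have d_6_1_8 : (c 1 6).val ≠ (c 6 8).val := by
    have e1 := congrArg Fin.val (hsym 6 1)
    have e2 := congrArg Fin.val (hsym 6 8)
    have := Fin.val_ne_of_ne (h 6 1 8 (padj 6 1 (by decide)) (padj 6 8 (by decide)) (by decide))
    omega
  have d_6_1_9 : (c 1 6).val ≠ (c 6 9).val := by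
    have e1 := congrArg Fin.val (hsym 6 1)
    have e2 := congrArg Fin.val (hsym 6 9)
    have := Fin.val_ne_of_ne (h 6 1 9 (padj 6 1 (by decide)) (padj 6 9 (by decide)) (by decide))
    omega
  have d_6_8_9 : (c 6 8).val ≠ (c 6 9).val := by
    have e1 := congrArg Fin.val (hsym 6 8)
    have e2 := congrArg Fin.val (hsym 6 9)
    have := Fin.val_ne_of_ne (h 6 8 9 (padj 6 8 (by decide)) (padj 6 9 (by decide)) (by decide))
    omega
  have d_7_2_5 : (c 2 7).val ≠ (c 5 7).val := by
    have e1 := congrArg Fin.val (hsym 7 2)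
    have e2 := congrArg Fin.val (hsym 7 5)
    have := Fin.val_ne_of_ne (h 7 2 5 (padj 7 2 (by decide)) (padj 7 5 (by decide)) (by decide))
    omega
  have d_7_2_9 : (c 2 7).val ≠ (c 7 9).val := by
    have e1 := congrArg Fin.val (hsym 7 2)
    have e2 := congrArg Fin.val (hsym 7 9)
    have := Fin.val_ne_of_ne (h 7 2 9 (padj 7 2 (by decide)) (padj 7 9 (by decide)) (by decide))
    omega
  have d_7_5_9 : (c 5 7).val ≠ (c 7 9).val := by
    have e1 := congrArg Fin.val (hsym 7 5)
    have e2 := congrArg Fin.val (hsym 7 9)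
    have := Fin.val_ne_of_ne (h 7 5 9 (padj 7 5 (by decide)) (padj 7 9 (by decide)) (by decide))
    omega
  have d_8_3_5 : (c 3 8).val ≠ (c 5 8).val := by
    have e1 := congrArg Fin.val (hsym 8 3)
    have e2 := congrArg Fin.val (hsym 8 5)
    have := Fin.val_ne_of_ne (h 8 3 5 (padj 8 3 (by decide)) (padj 8 5 (by decide)) (by decide))
    omega
  have d_8_3_6 : (c 3 8).val ≠ (c 6 8).val := by
    have e1 := congrArg Fin.val (hsym 8 3)
    have e2 := congrArg Fin.val (hsym 8 6)
    have := Fin.val_ne_of_ne (h 8 3 6 (padj 8 3 (by decide)) (padj 8 6 (by decide)) (by decide))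
    omega
  have d_8_5_6 : (c 5 8).val ≠ (c 6 8).val := by
    have e1 := congrArg Fin.val (hsym 8 5)
    have e2 := congrArg Fin.val (hsym 8 6)
    have := Fin.val_ne_of_ne (h 8 5 6 (padj 8 5 (by decide)) (padj 8 6 (by decide)) (by decide))
    omega
  have d_9_4_6 : (c 4 9).val ≠ (c 6 9).val := by
    have e1 := congrArg Fin.val (hsym 9 4)
    have e2 := congrArg Fin.val (hsym 9 6)
    have := Fin.val_ne_of_ne (h 9 4 6 (padj 9 4 (by decide)) (padj 9 6 (by decide)) (by decide))
    omega
  have d_9_4_7 : (c 4 9).val ≠ (c 7 9).val := by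
    have e1 := congrArg Fin.val (hsym 9 4)
    have e2 := congrArg Fin.val (hsym 9 7)
    have := Fin.val_ne_of_ne (h 9 4 7 (padj 9 4 (by decide)) (padj 9 7 (by decide)) (by decide))
    omega
  have d_9_6_7 : (c 6 9).val ≠ (c 7 9).val := by
    have e1 := congrArg Fin.val (hsym 9 6)
    have e2 := congrArg Fin.val (hsym 9 7)
    have := Fin.val_ne_of_ne (h 9 6 7 (padj 9 6 (by decide)) (padj 9 7 (by decide)) (by decide))
    omega
  set a0 := (c 0 1).val with ha0
  set a1 := (c 1 2).val with ha1
  set a2 := (c 2 3).val with ha2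
  set a3 := (c 3 4).val with ha3
  set a4 := (c 0 4).val with ha4
  interval_cases a0 <;> interval_cases a1 <;> interval_cases a2 <;>
    interval_cases a3 <;> interval_cases a4 <;> omega
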